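/- Let γ ∈ (0,1), N ≥ 1, K > 0, v > 1 with ((1+γ²)/2)·v^{1/2} < 1, and I_n = I₀·v^n for I₀ > 0. Suppose a sequence of ℝ^N-valued random vectors (p̂_n) and a fixed vector p* satisfy: (i) ‖p* - z(p̂_n)‖ ≤ γ‖p* - p̂_n‖ almost surely for a map z, and (ii) E[‖z(p̂_n) - p̂_{n+1}‖²] ≤ N²·K·I_n^{-1/2} for all n. Then there is a constant K' with E[‖p̂_{n+1} - p*‖²] ≤ N²·K'·I_n^{-1/2} for all n, and in particular p̂_n → p* in probability. -/

import Mathlib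

open MeasureTheory Filter

lemma aux_sq_stmt18 (γ a x y p : ℝ) (hγ0 : 0 < γ) (hγ1 : γ < 1) (ha : 0 ≤ a) (hy : 0 ≤ y)
    (hx : 0 ≤ x) (hp : 0 ≤ p) (hxa : x ≤ γ * a) (hpxy : p ≤ x + y) :
    p ^ 2 ≤ (1 + γ ^ 2) / 2 * a ^ 2 + (1 + γ ^ 2) / (1 - γ ^ 2) * y ^ 2 := by
  have h1 : 0 < 1 - γ ^ 2 := by nlinarith
  have hp2 : p ^ 2 ≤ (γ * a + y) ^ 2 := by nlinarith
  have key : (γ * a + y) ^ 2 ≤ (1 + γ ^ 2) / 2 * a ^ 2 + (1 + γ ^ 2) / (1 - γ ^ 2) * y ^ 2 := by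
    rw [div_mul_eq_mul_div, div_mul_eq_mul_div,
      div_add_div _ _ (by norm_num : (2:ℝ) ≠ 0) (ne_of_gt h1), le_div_iff₀ (by positivity)]
    nlinarith [sq_nonneg ((1 - γ ^ 2) * a - 2 * γ * y)]
  linarith

set_option maxHeartbeats 1000000 in
theorem stmt_18 {Ω : Type*} [MeasurableSpace Ω] (μ : Measure Ω) [IsProbabilityMeasure μ]
    (N : ℕ) (hN : 1 ≤ N) (γ K I₀ v : ℝ)
    (hγ : γ ∈ Set.Ioo (0:ℝ) 1) (hK : 0 < K) (hI : 0 < I₀) (hv : 1 < v)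
    (hηv : (1 + γ ^ 2) / 2 * Real.sqrt v < 1)
    (I : ℕ → ℝ) (hIdef : ∀ n, I n = I₀ * v ^ n)
    (z : EuclideanSpace ℝ (Fin N) → EuclideanSpace ℝ (Fin N))
    (phat : ℕ → Ω → EuclideanSpace ℝ (Fin N)) (hm : ∀ n, Measurable (phat n))
    (pstar : EuclideanSpace ℝ (Fin N))
    (h0 : ∫⁻ ω, ENNReal.ofReal (‖phat 0 ω - pstar‖ ^ 2) ∂μ ≠ ⊤)
    (hcontr : ∀ n, ∀ᵐ ω ∂μ, ‖pstar - z (phat n ω)‖ ≤ γ * ‖pstar - phat n ω‖)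
    (hest : ∀ n, ∫⁻ ω, ENNReal.ofReal (‖z (phat n ω) - phat (n + 1) ω‖ ^ 2) ∂μ ≤
      ENNReal.ofReal ((N : ℝ) ^ 2 * K * I n ^ (-(1 / 2) : ℝ))) :
    (∃ K' > 0, ∀ n, ∫⁻ ω, ENNReal.ofReal (‖phat (n + 1) ω - pstar‖ ^ 2) ∂μ ≤
      ENNReal.ofReal ((N : ℝ) ^ 2 * K' * I n ^ (-(1 / 2) : ℝ))) ∧
    ∀ ε : ℝ, 0 < ε →
      Filter.Tendsto (fun n => μ {ω | ε ≤ ‖phat n ω - pstar‖}) Filter.atTop (nhds 0) := by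
  obtain ⟨hγ0, hγ1⟩ := hγ
  have hv0 : (0:ℝ) < v := lt_trans one_pos hv
  have hsv : 1 < Real.sqrt v := by
    rw [show (1:ℝ) = Real.sqrt 1 by simp]
    exact Real.sqrt_lt_sqrt (by norm_num) hv
  have hsv0 : 0 < Real.sqrt v := lt_trans one_pos hsv
  have hη0 : 0 < (1 + γ ^ 2) / 2 := by positivity
  have hc0 : 0 < (1 + γ ^ 2) / (1 - γ ^ 2) := by
    apply div_pos (by positivity); nlinarith
  set η : ℝ := (1 + γ ^ 2) / 2 with hη_def
  set c : ℝ := (1 + γ ^ 2) / (1 - γ ^ 2) with hc_def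
  set s : ℝ := (Real.sqrt v)⁻¹ with hs_def
  have hs0 : 0 < s := inv_pos.mpr hsv0
  have hs1 : s < 1 := inv_lt_one_of_one_lt₀ hsv
  have hηs : η < s := by
    rw [hs_def, ← one_div, lt_div_iff₀ hsv0]; exact hηv
  have hN2 : (0:ℝ) < (N:ℝ)^2 := by
    have : (1:ℝ) ≤ (N:ℝ) := by exact_mod_cast hN
    positivity
  -- rpow computations
  set J : ℝ := I₀ ^ (-(1/2) : ℝ) with hJ_def
  have hJ0 : 0 < J := Real.rpow_pos_of_pos hI _
  have hveq : v ^ (-(1/2) : ℝ) = s := by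
    rw [Real.rpow_neg hv0.le, hs_def, Real.sqrt_eq_rpow]
  have hIeq : ∀ n : ℕ, I n ^ (-(1/2) : ℝ) = J * s ^ n := by
    intro n
    rw [hIdef n, Real.mul_rpow hI.le (by positivity), ← Real.rpow_natCast v n,
      ← Real.rpow_mul hv0.le, mul_comm (n:ℝ) (-(1/2) : ℝ), Real.rpow_mul hv0.le, hveq,
      Real.rpow_natCast]
  clear_value J s c η
  -- measurability
  have meas_f : ∀ n, Measurable fun ω => ENNReal.ofReal (‖phat n ω - pstar‖ ^ 2) := by
    intro n
    exact ENNReal.measurable_ofReal.comp (((hm n).sub measurable_const).norm.pow_const 2)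
  -- key recursion
  have key : ∀ n, ∫⁻ ω, ENNReal.ofReal (‖phat (n + 1) ω - pstar‖ ^ 2) ∂μ ≤
      ENNReal.ofReal η * ∫⁻ ω, ENNReal.ofReal (‖phat n ω - pstar‖ ^ 2) ∂μ +
      ENNReal.ofReal c * ENNReal.ofReal ((N : ℝ) ^ 2 * K * I n ^ (-(1 / 2) : ℝ)) := by
    intro n
    have hae : ∀ᵐ ω ∂μ, ENNReal.ofReal (‖phat (n + 1) ω - pstar‖ ^ 2) ≤
        ENNReal.ofReal (η * ‖phat n ω - pstar‖ ^ 2) +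
        ENNReal.ofReal (c * ‖z (phat n ω) - phat (n + 1) ω‖ ^ 2) := by
      filter_upwards [hcontr n] with ω hω
      rw [← ENNReal.ofReal_add (mul_nonneg hη0.le (by positivity))
        (mul_nonneg hc0.le (by positivity))]
      apply ENNReal.ofReal_le_ofReal
      rw [norm_sub_rev (pstar) (phat n ω)] at hω
      have htri : ‖phat (n + 1) ω - pstar‖ ≤
          ‖pstar - z (phat n ω)‖ + ‖z (phat n ω) - phat (n + 1) ω‖ := by
        rw [norm_sub_rev]
        simpa [dist_eq_norm] using dist_triangle pstar (z (phat n ω)) (phat (n + 1) ω)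
      rw [hη_def, hc_def]
      exact aux_sq_stmt18 γ _ _ _ _ hγ0 hγ1 (norm_nonneg _) (norm_nonneg _)
        (norm_nonneg _) (norm_nonneg _) hω htri
    calc ∫⁻ ω, ENNReal.ofReal (‖phat (n + 1) ω - pstar‖ ^ 2) ∂μ
        ≤ ∫⁻ ω, (ENNReal.ofReal (η * ‖phat n ω - pstar‖ ^ 2) +
            ENNReal.ofReal (c * ‖z (phat n ω) - phat (n + 1) ω‖ ^ 2)) ∂μ :=
          lintegral_mono_ae hae
      _ = ∫⁻ ω, ENNReal.ofReal (η * ‖phat n ω - pstar‖ ^ 2) ∂μ +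
          ∫⁻ ω, ENNReal.ofReal (c * ‖z (phat n ω) - phat (n + 1) ω‖ ^ 2) ∂μ :=
          lintegral_add_left
            (ENNReal.measurable_ofReal.comp
              (measurable_const.mul (((hm n).sub measurable_const).norm.pow_const 2))) _
      _ = ENNReal.ofReal η * ∫⁻ ω, ENNReal.ofReal (‖phat n ω - pstar‖ ^ 2) ∂μ +
          ENNReal.ofReal c * ∫⁻ ω, ENNReal.ofReal (‖z (phat n ω) - phat (n + 1) ω‖ ^ 2) ∂μ := by
          simp_rw [ENNReal.ofReal_mul hη0.le, ENNReal.ofReal_mul hc0.le]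
          rw [lintegral_const_mul' _ _ ENNReal.ofReal_ne_top,
            lintegral_const_mul' _ _ ENNReal.ofReal_ne_top]
      _ ≤ ENNReal.ofReal η * ∫⁻ ω, ENNReal.ofReal (‖phat n ω - pstar‖ ^ 2) ∂μ +
          ENNReal.ofReal c * ENNReal.ofReal ((N : ℝ) ^ 2 * K * I n ^ (-(1 / 2) : ℝ)) :=
          add_le_add le_rfl (mul_le_mul_right (hest n) _)
  -- constants for the induction
  set a0 : ℝ := (∫⁻ ω, ENNReal.ofReal (‖phat 0 ω - pstar‖ ^ 2) ∂μ).toReal with ha0_def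
  have ha0 : 0 ≤ a0 := ENNReal.toReal_nonneg
  have hA0 : ∫⁻ ω, ENNReal.ofReal (‖phat 0 ω - pstar‖ ^ 2) ∂μ = ENNReal.ofReal a0 :=
    (ENNReal.ofReal_toReal h0).symm
  set K' : ℝ := η * a0 / ((N:ℝ)^2 * J) + c * K + c * K / (s - η) + 1 with hK'_def
  have hsub : 0 < s - η := sub_pos.mpr hηs
  have h1 : 0 ≤ η * a0 / ((N:ℝ)^2 * J) := div_nonneg (mul_nonneg hη0.le ha0) (by positivity)
  have h2 : 0 < c * K := mul_pos hc0 hK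
  have h3 : 0 < c * K / (s - η) := div_pos h2 hsub
  have hK'0 : 0 < K' := by rw [hK'_def]; linarith
  have hK'ge : c * K ≤ K' * (s - η) := by
    have : c * K / (s - η) ≤ K' := by rw [hK'_def]; linarith
    rw [div_le_iff₀ hsub] at this; exact this
  clear_value K' a0
  -- main inductive bound
  have main : ∀ n, ∫⁻ ω, ENNReal.ofReal (‖phat (n + 1) ω - pstar‖ ^ 2) ∂μ ≤
      ENNReal.ofReal ((N : ℝ) ^ 2 * K' * (J * s ^ n)) := by
    intro n
    induction n with
    | zero =>
      refine (key 0).trans ?_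
      rw [hA0, hIeq 0, ← ENNReal.ofReal_mul hη0.le, ← ENNReal.ofReal_mul hc0.le,
        ← ENNReal.ofReal_add (mul_nonneg hη0.le ha0)
          (mul_nonneg hc0.le (by positivity))]
      apply ENNReal.ofReal_le_ofReal
      have e1 : (N:ℝ)^2 * K' * (J * s ^ 0) =
          η * a0 + ((N:ℝ)^2 * J) * (c * K) + ((N:ℝ)^2 * J) * (c * K / (s - η)) +
          (N:ℝ)^2 * J := by
        rw [hK'_def, pow_zero]; field_simp
      have h4 : 0 ≤ ((N:ℝ)^2 * J) * (c * K / (s - η)) :=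
        mul_nonneg (by positivity) h3.le
      have h5 : 0 < (N:ℝ)^2 * J := by positivity
      have e2 : c * ((N:ℝ)^2 * K * (J * 1)) = ((N:ℝ)^2 * J) * (c * K) := by ring
      rw [pow_zero] at e1 ⊢
      linarith
    | succ n ih =>
      refine (key (n + 1)).trans ?_
      rw [hIeq (n + 1)]
      calc ENNReal.ofReal η * ∫⁻ ω, ENNReal.ofReal (‖phat (n + 1) ω - pstar‖ ^ 2) ∂μ +
          ENNReal.ofReal c * ENNReal.ofReal ((N : ℝ) ^ 2 * K * (J * s ^ (n + 1)))
          ≤ ENNReal.ofReal η * ENNReal.ofReal ((N : ℝ) ^ 2 * K' * (J * s ^ n)) +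
            ENNReal.ofReal c * ENNReal.ofReal ((N : ℝ) ^ 2 * K * (J * s ^ (n + 1))) :=
            add_le_add (mul_le_mul_right ih _) le_rfl
        _ = ENNReal.ofReal (η * ((N : ℝ) ^ 2 * K' * (J * s ^ n)) +
            c * ((N : ℝ) ^ 2 * K * (J * s ^ (n + 1)))) := by
            rw [← ENNReal.ofReal_mul hη0.le, ← ENNReal.ofReal_mul hc0.le,
              ← ENNReal.ofReal_add (mul_nonneg hη0.le (by positivity))
                (mul_nonneg hc0.le (by positivity))]
        _ ≤ ENNReal.ofReal ((N : ℝ) ^ 2 * K' * (J * s ^ (n + 1))) := by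
            apply ENNReal.ofReal_le_ofReal
            have h6 : η * K' + c * K * s ≤ K' * s := by nlinarith [mul_pos hc0 hK]
            have h7 : 0 ≤ (N:ℝ)^2 * J * s ^ n :=
              le_of_lt (by positivity)
            have := mul_le_mul_of_nonneg_left h6 h7
            rw [pow_succ s n]
            nlinarith
  refine ⟨⟨K', hK'0, fun n => ?_⟩, fun ε hε => ?_⟩
  · rw [hIeq n]; exact main n
  -- convergence in probability
  · have hε2 : (0:ℝ) < ε ^ 2 := by positivity
    have cheb : ∀ n, μ {ω | ε ≤ ‖phat n ω - pstar‖} ≤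
        (∫⁻ ω, ENNReal.ofReal (‖phat n ω - pstar‖ ^ 2) ∂μ) / ENNReal.ofReal (ε ^ 2) := by
      intro n
      have hset : {ω | ε ≤ ‖phat n ω - pstar‖} =
          {ω | ENNReal.ofReal (ε ^ 2) ≤ ENNReal.ofReal (‖phat n ω - pstar‖ ^ 2)} := by
        ext ω
        simp only [Set.mem_setOf_eq, ENNReal.ofReal_le_ofReal_iff (by positivity :
          (0:ℝ) ≤ ‖phat n ω - pstar‖ ^ 2)]
        constructor
        · intro h; exact pow_le_pow_left₀ hε.le h 2
        · intro h; nlinarith [norm_nonneg (phat n ω - pstar)]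
      rw [hset]
      exact meas_ge_le_lintegral_div (meas_f n).aemeasurable
        (ENNReal.ofReal_pos.mpr hε2).ne' ENNReal.ofReal_ne_top
    have hbound : ∀ n, μ {ω | ε ≤ ‖phat (n + 1) ω - pstar‖} ≤
        ENNReal.ofReal ((N : ℝ) ^ 2 * K' * (J * s ^ n) / ε ^ 2) := by
      intro n
      refine (cheb (n + 1)).trans ?_
      rw [ENNReal.ofReal_div_of_pos hε2]
      exact ENNReal.div_le_div_right (main n) _
    have hreal : Tendsto (fun n : ℕ => (N : ℝ) ^ 2 * K' * (J * s ^ n) / ε ^ 2) atTop (nhds 0) := by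
      have : Tendsto (fun n : ℕ => s ^ n) atTop (nhds 0) :=
        tendsto_pow_atTop_nhds_zero_of_lt_one hs0.le hs1
      have h := (this.const_mul ((N : ℝ) ^ 2 * K' * J / ε ^ 2))
      rw [mul_zero] at h
      convert h using 2 with n
      field_simp
    have htend1 : Tendsto (fun n : ℕ => μ {ω | ε ≤ ‖phat (n + 1) ω - pstar‖}) atTop (nhds 0) := by
      have h := (ENNReal.tendsto_ofReal hreal)
      rw [ENNReal.ofReal_zero] at h
      exact tendsto_of_tendsto_of_tendsto_of_le_of_le tendsto_const_nhds h
        (fun n => zero_le) hbound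
    exact (Filter.tendsto_add_atTop_iff_nat 1).mp htend1
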